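/- Let M be a uniform random element of M_{n,d}, fix distinct i₁, i₂ ∈ [n], and let (M, M̃, π, ξ) be the shuffling coupling at rows (i₁,i₂): conditional on M, π : Ex_M(i₁,i₂) → Ex_M(i₂,i₁) is a uniform random bijection; ξ : [n] → {±1} are iid uniform signs independent of everything else; and M̃ is obtained from M by replacing, for each j ∈ Ex_M(i₁,i₂), the 2×2 minor with rows (i₁,i₂) and columns (j, π(j)) by I if ξ(j) = +1 and by J = [[0,1],[1,0]] if ξ(j) = −1. Let u ∈ ℝⁿ be deterministic or random depending only on the rows (R_i : i ∉ {i₁,i₂}) of M, and define Steps(u) = {j ∈ Ex_M(i₁,i₂) : u(j) ≠ u(π(j))}. Then, conditional on M, π, and u, the probability over ξ that the i₁-th row R̃_{i₁} of M̃ satisfies R̃_{i₁}·u = 0 is O(|Steps(u)|^{−1/2}). -/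

import Mathlib

open scoped Classical
open scoped symmDiff

noncomputable section

/-- `M_{n,d}`: 0/1 matrices all of whose row and column sums equal `d`. -/
def regSet (n d : ℕ) : Finset (Matrix (Fin n) (Fin n) Bool) :=
  Finset.univ.filter fun A =>
    (∀ i, (Finset.univ.filter fun j => A i j = true).card = d) ∧
    (∀ j, (Finset.univ.filter fun i => A i j = true).card = d)

/-- `Ex_M(i₁,i₂) = N_M(i₁) \ N_M(i₂)`. -/
def exSet {n : ℕ} (M : Matrix (Fin n) (Fin n) Bool) (i₁ i₂ : Fin n) : Finset (Fin n) :=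
  Finset.univ.filter fun j => M i₁ j = true ∧ M i₂ j = false

/-- The shuffled matrix: for each `j ∈ T` the `2 × 2` minor at rows `(i₁,i₂)` and
columns `(j, σ j)` is set to `I` if `ξ j = true` (sign `+1`) and to `J = [[0,1],[1,0]]`
if `ξ j = false` (sign `-1`); the bijection `π` is encoded as (the restriction to `T`
of) the permutation `σ`. -/
def shuffleAt {n : ℕ} (M : Matrix (Fin n) (Fin n) Bool) (i₁ i₂ : Fin n)
    (T : Finset (Fin n)) (σ : Equiv.Perm (Fin n)) (ξ : Fin n → Bool) :
    Matrix (Fin n) (Fin n) Bool :=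
  Matrix.of fun i j =>
    if i = i₁ then
      if j ∈ T then ξ j
      else if σ⁻¹ j ∈ T then !(ξ (σ⁻¹ j))
      else M i j
    else if i = i₂ then
      if j ∈ T then !(ξ j)
      else if σ⁻¹ j ∈ T then ξ (σ⁻¹ j)
      else M i j
    else M i j

/-- Probability of the event `p` for a uniform random element of the finite set `s`. -/
def cprob {α : Type*} [Fintype α] (s : Finset α) (p : α → Prop) : ℝ :=
  ((s.filter p).card : ℝ) / (s.card : ℝ)

/-- **The role of the signs ξ.**  For any `M ∈ M_{n,d}`, distinct rows `i₁ ≠ i₂`, any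
bijection `π : Ex_M(i₁,i₂) → Ex_M(i₂,i₁)` (encoded by a permutation `σ` mapping
`Ex_M(i₁,i₂)` onto `Ex_M(i₂,i₁)`), and any vector `u` (deterministic, or random
depending only on the other rows — equivalently, arbitrary once `M` is fixed), the
probability over the iid uniform signs `ξ` that the `i₁`-th row `R̃_{i₁}` of the
shuffled matrix `M̃` satisfies `R̃_{i₁} · u = 0` is `O(|Steps(u)|^{-1/2})`, where
`Steps(u) = {j ∈ Ex_M(i₁,i₂) : u(j) ≠ u(π(j))}`. -/

lemma centralBinom_sq (m : ℕ) : (3*m+1) * (Nat.centralBinom m)^2 ≤ 16^m := by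
  induction m with
  | zero => simp [Nat.centralBinom]
  | succ m ih =>
      have key : (m+1) * Nat.centralBinom (m+1) = 2 * (2*m+1) * Nat.centralBinom m :=
        Nat.succ_mul_centralBinom_succ m
      have e0 : ((m+1) * Nat.centralBinom (m+1))^2
          = (2*(2*m+1) * Nat.centralBinom m)^2 := by rw [key]
      have e : (m+1)^2 * (Nat.centralBinom (m+1))^2
          = 4*(2*m+1)^2 * (Nat.centralBinom m)^2 := by
        calc (m+1)^2 * (Nat.centralBinom (m+1))^2
            = ((m+1) * Nat.centralBinom (m+1))^2 := by ring
          _ = (2*(2*m+1) * Nat.centralBinom m)^2 := e0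
          _ = 4*(2*m+1)^2 * (Nat.centralBinom m)^2 := by ring
      have poly : 4*(3*m+4)*(2*m+1)^2 ≤ 16*(m+1)^2*(3*m+1) := by nlinarith
      have big : (m+1)^2 * (3*m+1) * ((3*(m+1)+1) * (Nat.centralBinom (m+1))^2)
          ≤ (m+1)^2 * (3*m+1) * 16^(m+1) := by
        calc (m+1)^2 * (3*m+1) * ((3*(m+1)+1) * (Nat.centralBinom (m+1))^2)
            = (3*m+1)*(3*m+4)*((m+1)^2 * (Nat.centralBinom (m+1))^2) := by ring
          _ = (3*m+1)*(3*m+4)*(4*(2*m+1)^2 * (Nat.centralBinom m)^2) := by rw [e]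
          _ = (4*(3*m+4)*(2*m+1)^2) * ((3*m+1) * (Nat.centralBinom m)^2) := by ring
          _ ≤ (4*(3*m+4)*(2*m+1)^2) * 16^m := Nat.mul_le_mul_left _ ih
          _ ≤ (16*(m+1)^2*(3*m+1)) * 16^m := Nat.mul_le_mul_right _ poly
          _ = (m+1)^2 * (3*m+1) * 16^(m+1) := by ring
      exact Nat.le_of_mul_le_mul_left big (by positivity)

lemma binom_bound (k : ℕ) : k * (Nat.choose k (k/2))^2 ≤ 4^k := by
  rcases Nat.even_or_odd k with ⟨m, hm⟩ | ⟨m, hm⟩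
  · subst hm
    have h2m : m + m = 2*m := by ring
    rw [h2m]
    have hd : 2*m/2 = m := by omega
    have h1 : (2*m) * (Nat.choose (2*m) (2*m/2))^2 ≤ (3*m+1) * (Nat.centralBinom m)^2 := by
      rw [Nat.centralBinom, hd]
      exact Nat.mul_le_mul_right _ (by omega)
    calc (2*m) * (Nat.choose (2*m) (2*m/2))^2 ≤ 16^m := le_trans h1 (centralBinom_sq m)
      _ = 4^(2*m) := by rw [pow_mul]; norm_num
  · subst hm
    rcases Nat.eq_zero_or_pos m with rfl | hm0
    · norm_num
    obtain ⟨m', rfl⟩ := Nat.exists_eq_succ_of_ne_zero (Nat.pos_iff_ne_zero.mp hm0)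
    set m := m' + 1
    have hdiv : (2*m+1)/2 = m := by omega
    rw [hdiv]
    have hpascal : Nat.choose (2*m+1) m = Nat.choose (2*m) m' + Nat.choose (2*m) m := by
      have : 2*m+1 = (2*m)+1 := by ring
      rw [this, show m = m'+1 from rfl, Nat.choose_succ_succ']
    have hle : Nat.choose (2*m+1) m ≤ 2 * Nat.centralBinom m := by
      rw [hpascal, Nat.centralBinom]
      have h1 : Nat.choose (2*m) m' ≤ Nat.choose (2*m) (2*m/2) := Nat.choose_le_middle _ _
      have hd : 2*m/2 = m := by omega
      rw [hd] at h1
      omega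
    calc (2*m+1) * (Nat.choose (2*m+1) m)^2
        ≤ (2*m+1) * (2 * Nat.centralBinom m)^2 :=
          Nat.mul_le_mul_left _ (Nat.pow_le_pow_left hle 2)
      _ = 4 * ((2*m+1) * (Nat.centralBinom m)^2) := by ring
      _ ≤ 4 * ((3*m+1) * (Nat.centralBinom m)^2) := by
          apply Nat.mul_le_mul_left; exact Nat.mul_le_mul_right _ (by omega)
      _ ≤ 4 * 16^m := Nat.mul_le_mul_left _ (centralBinom_sq m)
      _ = 4^(2*m+1) := by
          have : (16:ℕ)^m = 4^(2*m) := by rw [pow_mul]; norm_num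
          rw [this, pow_succ]; ring


lemma littlewood_offord {ι : Type*} [Fintype ι] [DecidableEq ι]
    (v : ι → ℝ) (hv : ∀ i, v i ≠ 0) (t : ℝ) :
    (Finset.univ.filter fun A : Finset ι => ∑ i ∈ A, v i = t).card
      ≤ (Fintype.card ι).choose (Fintype.card ι / 2) := by
  set N : Finset ι := Finset.univ.filter fun i => v i < 0 with hN
  have habs : ∀ A : Finset ι, ∑ i ∈ A ∆ N, |v i| = ∑ i ∈ A, v i - ∑ i ∈ N, v i := by
    intro A
    have hsd : A ∆ N = (A \ N) ∪ (N \ A) := by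
      rw [symmDiff_def]; rfl
    have hdisj : Disjoint (A \ N) (N \ A) := disjoint_sdiff_sdiff
    rw [hsd, Finset.sum_union hdisj]
    have h1 : ∑ i ∈ A \ N, |v i| = ∑ i ∈ A \ N, v i := by
      apply Finset.sum_congr rfl
      intro i hi
      have : ¬ v i < 0 := by
        have := (Finset.mem_sdiff.mp hi).2
        simpa [hN] using this
      exact abs_of_nonneg (le_of_not_gt this)
    have h2 : ∑ i ∈ N \ A, |v i| = ∑ i ∈ N \ A, -v i := by
      apply Finset.sum_congr rfl
      intro i hi
      have : v i < 0 := by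
        have := (Finset.mem_sdiff.mp hi).1
        simpa [hN] using this
      exact abs_of_neg this
    rw [h1, h2]
    have hA : ∑ i ∈ A ∩ N, v i + ∑ i ∈ A \ N, v i = ∑ i ∈ A, v i :=
      Finset.sum_inter_add_sum_sdiff A N v
    have hNs : ∑ i ∈ N ∩ A, v i + ∑ i ∈ N \ A, v i = ∑ i ∈ N, v i :=
      Finset.sum_inter_add_sum_sdiff N A v
    have hc : ∑ i ∈ A ∩ N, v i = ∑ i ∈ N ∩ A, v i := by rw [Finset.inter_comm]
    rw [Finset.sum_neg_distrib]
    linarith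
  -- the family of symmetric differences
  set 𝒞 : Finset (Finset ι) :=
    Finset.univ.filter (fun B : Finset ι => ∑ i ∈ B, |v i| = t - ∑ i ∈ N, v i) with h𝒞
  have hinj : ∀ A ∈ (Finset.univ.filter fun A : Finset ι => ∑ i ∈ A, v i = t),
      A ∆ N ∈ 𝒞 := by
    intro A hA
    rw [Finset.mem_filter] at hA
    rw [h𝒞, Finset.mem_filter]
    exact ⟨Finset.mem_univ _, by rw [habs A, hA.2]⟩
  have hcard : (Finset.univ.filter fun A : Finset ι => ∑ i ∈ A, v i = t).card ≤ 𝒞.card := by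
    apply Finset.card_le_card_of_injOn (fun A => A ∆ N) hinj
    intro A _ B _ h
    have := congrArg (fun X => X ∆ N) h
    simpa [symmDiff_symmDiff_cancel_right] using this
  refine hcard.trans ?_
  have hanti : IsAntichain (· ⊆ ·) (𝒞 : Set (Finset ι)) := by
    intro A hA B hB hne hsub
    simp only [h𝒞, Finset.coe_filter, Set.mem_setOf_eq] at hA hB
    have hss : A ⊂ B := lt_of_le_of_ne hsub hne
    obtain ⟨i, hiB, hiA⟩ := Finset.exists_of_ssubset hss
    have hlt : ∑ i ∈ A, |v i| < ∑ i ∈ B, |v i| := by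
      apply Finset.sum_lt_sum_of_subset hsub hiB hiA
      · exact abs_pos.mpr (hv i)
      · intro j _ _; exact abs_nonneg _
    rw [hA.2, hB.2] at hlt
    exact lt_irrefl _ hlt
  exact IsAntichain.sperner hanti

lemma main_anticonc (n : ℕ) (S : Finset (Fin n)) (v : Fin n → ℝ)
    (hv : ∀ j ∈ S, v j ≠ 0) (t : ℝ) :
    Real.sqrt S.card *
      cprob (Finset.univ : Finset (Fin n → Bool))
        (fun ξ => ∑ j ∈ S, (if ξ j then v j else 0) = t) ≤ 1 := by
  set k := S.card with hk
  have hkn : k ≤ n := by simpa using Finset.card_le_card (Finset.subset_univ S)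
  -- the family of subsets of S with the right sum, living on the subtype ↥S
  set ℬ : Finset (Finset {x // x ∈ S}) :=
    Finset.univ.filter (fun B => ∑ x ∈ B, v x.val = t) with hℬ
  have hℬcard : ℬ.card ≤ k.choose (k/2) := by
    have := littlewood_offord (fun x : {x // x ∈ S} => v x.val)
      (fun x => hv x.val x.property) t
    simpa [hℬ, Fintype.card_coe] using this
  -- count the ξ's
  set p : (Fin n → Bool) → Prop := fun ξ => ∑ j ∈ S, (if ξ j then v j else 0) = t with hp
  set Φ : (Fin n → Bool) → Finset {x // x ∈ S} :=
    fun ξ => Finset.univ.filter (fun x : {x // x ∈ S} => ξ x.val = true) with hΦ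
  have hΦmem : ∀ ξ ∈ Finset.univ.filter p, Φ ξ ∈ ℬ := by
    intro ξ hξ
    rw [Finset.mem_filter] at hξ
    rw [hℬ, Finset.mem_filter]
    refine ⟨Finset.mem_univ _, ?_⟩
    have : ∑ x ∈ Φ ξ, v x.val = ∑ x : {x // x ∈ S}, (if ξ x.val then v x.val else 0) := by
      rw [hΦ]; rw [Finset.sum_filter]
    rw [this, Finset.univ_eq_attach, Finset.sum_attach S (fun j => if ξ j then v j else 0)]
    exact hξ.2
  have hfiber : ∀ B ∈ ℬ, ((Finset.univ.filter p).filter (fun ξ => Φ ξ = B)).card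
      ≤ 2^(n - k) := by
    intro B _
    have hinj : ∀ ξ₁ ∈ (Finset.univ.filter p).filter (fun ξ => Φ ξ = B),
        ∀ ξ₂ ∈ (Finset.univ.filter p).filter (fun ξ => Φ ξ = B),
        (fun x : {j : Fin n // j ∉ S} => ξ₁ x.val) = (fun x => ξ₂ x.val) → ξ₁ = ξ₂ := by
      intro ξ₁ h₁ ξ₂ h₂ hf
      rw [Finset.mem_filter] at h₁ h₂
      funext j
      by_cases hj : j ∈ S
      · have e1 : (ξ₁ j = true) ↔ (⟨j, hj⟩ : {x // x ∈ S}) ∈ B := by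
          rw [← h₁.2, hΦ]; simp
        have e2 : (ξ₂ j = true) ↔ (⟨j, hj⟩ : {x // x ∈ S}) ∈ B := by
          rw [← h₂.2, hΦ]; simp
        rcases Bool.eq_false_or_eq_true (ξ₁ j) with h | h <;>
          rcases Bool.eq_false_or_eq_true (ξ₂ j) with h' | h' <;>
          simp_all
      · exact congrFun hf ⟨j, hj⟩
    have := Finset.card_le_card_of_injOn
      (f := fun ξ (x : {j : Fin n // j ∉ S}) => ξ x.val)
      (fun ξ _ => Finset.mem_univ _) (fun ξ₁ h₁ ξ₂ h₂ h => hinj ξ₁ h₁ ξ₂ h₂ h)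
    refine this.trans ?_
    have h1 : (Finset.univ : Finset ({j : Fin n // j ∉ S} → Bool)).card
        = 2 ^ (Fintype.card {j : Fin n // j ∉ S}) := by
      rw [Finset.card_univ, Fintype.card_fun]
      simp
    rw [h1]
    have h2 : Fintype.card {j : Fin n // j ∉ S} = n - k := by
      rw [Fintype.card_subtype]
      have : Finset.univ.filter (fun j => j ∉ S) = Finset.univ \ S := by
        ext j; simp
      rw [this, Finset.card_sdiff_of_subset (Finset.subset_univ S)]
      simp [hk]
    rw [h2]
  have hcount : (Finset.univ.filter p).card ≤ k.choose (k/2) * 2^(n-k) := by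
    rw [Finset.card_eq_sum_card_fiberwise hΦmem]
    calc ∑ B ∈ ℬ, ((Finset.univ.filter p).filter (fun ξ => Φ ξ = B)).card
        ≤ ∑ B ∈ ℬ, 2^(n-k) := Finset.sum_le_sum hfiber
      _ = ℬ.card * 2^(n-k) := by rw [Finset.sum_const, smul_eq_mul]
      _ ≤ k.choose (k/2) * 2^(n-k) := Nat.mul_le_mul_right _ hℬcard
  -- now the real-number computation
  have hden : ((Finset.univ : Finset (Fin n → Bool)).card : ℝ) = 2^n := by
    rw [Finset.card_univ, Fintype.card_fun]
    simp
  have hcp : cprob (Finset.univ : Finset (Fin n → Bool)) p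
      ≤ (k.choose (k/2) : ℝ) / 2^k := by
    rw [cprob, hden]
    rw [div_le_div_iff₀ (by positivity) (by positivity)]
    calc ((Finset.univ.filter p).card : ℝ) * 2^k
        ≤ ((k.choose (k/2) * 2^(n-k) : ℕ) : ℝ) * 2^k := by
          apply mul_le_mul_of_nonneg_right _ (by positivity)
          exact_mod_cast hcount
      _ = (k.choose (k/2) : ℝ) * 2^n := by
          push_cast
          rw [mul_assoc, ← pow_add]
          congr 2
          omega
  have hsqrt : Real.sqrt k * (k.choose (k/2) : ℝ) ≤ 2^k := by
    have h1 : (Real.sqrt k * (k.choose (k/2) : ℝ))^2 ≤ ((2:ℝ)^k)^2 := by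
      rw [mul_pow, Real.sq_sqrt (by positivity)]
      have := binom_bound k
      have hc : ((k * (Nat.choose k (k/2))^2 : ℕ) : ℝ) ≤ ((4^k : ℕ) : ℝ) := by
        exact_mod_cast this
      push_cast at hc
      calc (k : ℝ) * (k.choose (k/2) : ℝ)^2 ≤ (4:ℝ)^k := hc
        _ = ((2:ℝ)^k)^2 := by rw [← pow_mul, mul_comm, pow_mul]; norm_num
    have h2 : (0:ℝ) ≤ Real.sqrt k * (k.choose (k/2) : ℝ) := by positivity
    exact (pow_le_pow_iff_left₀ h2 (by positivity) two_ne_zero).mp h1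
  have hcpnn : 0 ≤ cprob (Finset.univ : Finset (Fin n → Bool)) p := by
    rw [cprob]; positivity
  calc Real.sqrt k * cprob (Finset.univ : Finset (Fin n → Bool)) p
      ≤ Real.sqrt k * ((k.choose (k/2) : ℝ) / 2^k) := by
        apply mul_le_mul_of_nonneg_left hcp (Real.sqrt_nonneg _)
    _ = Real.sqrt k * (k.choose (k/2) : ℝ) / 2^k := by ring
    _ ≤ 2^k / 2^k := by
        apply div_le_div_of_nonneg_right hsqrt (by positivity) |>.trans_eq rfl
    _ = 1 := div_self (by positivity)

lemma shuffle_sum_decomp (n : ℕ) (M : Matrix (Fin n) (Fin n) Bool) (i₁ i₂ : Fin n)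
    (σ : Equiv.Perm (Fin n)) (hImg : (exSet M i₁ i₂).image σ = exSet M i₂ i₁)
    (u : Fin n → ℝ) :
    ∃ D : ℝ, ∀ ξ : Fin n → Bool,
      (∑ j, (if shuffleAt M i₁ i₂ (exSet M i₁ i₂) σ ξ i₁ j then u j else 0))
      = (∑ j ∈ (exSet M i₁ i₂).filter (fun j => u j ≠ u (σ j)),
          (if ξ j then u j - u (σ j) else 0)) + D := by
  classical
  set T := exSet M i₁ i₂ with hT
  set Steps := T.filter (fun j => u j ≠ u (σ j)) with hSteps
  set D : ℝ := (∑ j ∈ Steps, u (σ j)) + (∑ j ∈ T.filter (fun j => ¬ u j ≠ u (σ j)), u j)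
      + (∑ j ∈ Finset.univ \ (T ∪ T.image σ), (if M i₁ j then u j else 0)) with hD
  refine ⟨D, fun ξ => ?_⟩
  have hdisj : Disjoint T (T.image σ) := by
    rw [hImg]
    rw [Finset.disjoint_left]
    intro j hj hj'
    have h1 : M i₁ j = true := ((Finset.mem_filter.mp hj).2).1
    have h2 : M i₂ j = true := ((Finset.mem_filter.mp hj').2).1
    have h3 : M i₂ j = false := ((Finset.mem_filter.mp hj).2).2
    rw [h2] at h3; exact absurd h3 (by simp)
  have hrow : ∀ j, shuffleAt M i₁ i₂ T σ ξ i₁ j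
      = (if j ∈ T then ξ j else if σ⁻¹ j ∈ T then !(ξ (σ⁻¹ j)) else M i₁ j) := by
    intro j; simp [shuffleAt]
  have hsplit : (∑ j, (if shuffleAt M i₁ i₂ T σ ξ i₁ j then u j else 0))
      = (∑ j ∈ T ∪ T.image σ, (if shuffleAt M i₁ i₂ T σ ξ i₁ j then u j else 0))
      + (∑ j ∈ Finset.univ \ (T ∪ T.image σ), (if shuffleAt M i₁ i₂ T σ ξ i₁ j then u j else 0)) := by
    rw [← Finset.sum_sdiff (Finset.subset_univ (T ∪ T.image σ))]
    ring
  rw [hsplit, Finset.sum_union hdisj]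
  have hTsum : (∑ j ∈ T, (if shuffleAt M i₁ i₂ T σ ξ i₁ j then u j else 0))
      = ∑ j ∈ T, (if ξ j then u j else 0) := by
    apply Finset.sum_congr rfl
    intro j hj
    rw [hrow j, if_pos hj]
  have hImgsum : (∑ j ∈ T.image σ, (if shuffleAt M i₁ i₂ T σ ξ i₁ j then u j else 0))
      = ∑ j ∈ T, (if ξ j then 0 else u (σ j)) := by
    rw [Finset.sum_image (fun a _ b _ h => σ.injective h)]
    apply Finset.sum_congr rfl
    intro j hj
    have h1 : σ j ∉ T := Finset.disjoint_left.mp hdisj.symm (Finset.mem_image_of_mem σ hj)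
    have h2 : σ⁻¹ (σ j) ∈ T := by simpa using hj
    rw [hrow (σ j), if_neg h1, if_pos h2]
    simp only [Equiv.Perm.inv_def, Equiv.symm_apply_apply]
    cases h : ξ j <;> simp
  have hrest : (∑ j ∈ Finset.univ \ (T ∪ T.image σ), (if shuffleAt M i₁ i₂ T σ ξ i₁ j then u j else 0))
      = ∑ j ∈ Finset.univ \ (T ∪ T.image σ), (if M i₁ j then u j else 0) := by
    apply Finset.sum_congr rfl
    intro j hj
    rw [Finset.mem_sdiff, Finset.mem_union] at hj
    have h1 : j ∉ T := fun h => hj.2 (Or.inl h)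
    have h2 : σ⁻¹ j ∉ T := by
      intro h
      exact hj.2 (Or.inr (by simpa using Finset.mem_image_of_mem σ h))
    rw [hrow j, if_neg h1, if_neg h2]
  rw [hTsum, hImgsum, hrest]
  have hcomb : (∑ j ∈ T, (if ξ j then u j else 0)) + (∑ j ∈ T, (if ξ j then 0 else u (σ j)))
      = ∑ j ∈ T, (if ξ j then u j else u (σ j)) := by
    rw [← Finset.sum_add_distrib]
    apply Finset.sum_congr rfl
    intro j _
    cases h : ξ j <;> simp
  rw [hcomb]
  have hTsplit : (∑ j ∈ T, (if ξ j then u j else u (σ j)))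
      = (∑ j ∈ Steps, (if ξ j then u j else u (σ j)))
      + (∑ j ∈ T.filter (fun j => ¬ u j ≠ u (σ j)), (if ξ j then u j else u (σ j))) := by
    rw [hSteps, Finset.sum_filter_add_sum_filter_not]
  rw [hTsplit]
  have h3 : (∑ j ∈ T.filter (fun j => ¬ u j ≠ u (σ j)), (if ξ j then u j else u (σ j)))
      = ∑ j ∈ T.filter (fun j => ¬ u j ≠ u (σ j)), u j := by
    apply Finset.sum_congr rfl
    intro j hj
    have : u j = u (σ j) := not_not.mp (Finset.mem_filter.mp hj).2
    rw [← this, ite_self]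
  have h4 : (∑ j ∈ Steps, (if ξ j then u j else u (σ j)))
      = (∑ j ∈ Steps, (if ξ j then u j - u (σ j) else 0)) + ∑ j ∈ Steps, u (σ j) := by
    rw [← Finset.sum_add_distrib]
    apply Finset.sum_congr rfl
    intro j _
    cases h : ξ j <;> simp
  rw [h3, h4, hD]
  ring

theorem rwalk_anticoncentration :
    ∃ C : ℝ, 0 < C ∧ ∀ (n d : ℕ), 1 ≤ d → d ≤ n →
      ∀ M ∈ regSet n d, ∀ i₁ i₂ : Fin n, i₁ ≠ i₂ →
      ∀ σ : Equiv.Perm (Fin n), (exSet M i₁ i₂).image σ = exSet M i₂ i₁ →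
      ∀ u : Fin n → ℝ,
        Real.sqrt (((exSet M i₁ i₂).filter fun j => u j ≠ u (σ j)).card) *
          cprob (Finset.univ : Finset (Fin n → Bool)) (fun ξ =>
            ∑ j, (if shuffleAt M i₁ i₂ (exSet M i₁ i₂) σ ξ i₁ j then u j else 0) = 0)
        ≤ C := by
  refine ⟨1, one_pos, ?_⟩
  intro n d _ _ M _ i₁ i₂ _ σ hImg u
  obtain ⟨D, hD⟩ := shuffle_sum_decomp n M i₁ i₂ σ hImg u
  have hfilter : (Finset.univ.filter (fun ξ : Fin n → Bool =>
        ∑ j, (if shuffleAt M i₁ i₂ (exSet M i₁ i₂) σ ξ i₁ j then u j else 0) = 0))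
      = Finset.univ.filter (fun ξ : Fin n → Bool =>
        ∑ j ∈ (exSet M i₁ i₂).filter (fun j => u j ≠ u (σ j)),
          (if ξ j then u j - u (σ j) else 0) = -D) := by
    apply Finset.filter_congr
    intro ξ _
    rw [hD ξ]
    constructor <;> intro h <;> linarith
  have hcp : cprob (Finset.univ : Finset (Fin n → Bool)) (fun ξ =>
        ∑ j, (if shuffleAt M i₁ i₂ (exSet M i₁ i₂) σ ξ i₁ j then u j else 0) = 0)
      = cprob (Finset.univ : Finset (Fin n → Bool)) (fun ξ =>
        ∑ j ∈ (exSet M i₁ i₂).filter (fun j => u j ≠ u (σ j)),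
          (if ξ j then u j - u (σ j) else 0) = -D) := by
    unfold cprob
    rw [hfilter]
  rw [hcp]
  exact main_anticonc n ((exSet M i₁ i₂).filter (fun j => u j ≠ u (σ j)))
    (fun j => u j - u (σ j))
    (fun j hj => sub_ne_zero_of_ne (Finset.mem_filter.mp hj).2) (-D)

end
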